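/- Let ψ be a real unit vector in ℝ^D, let E be a real D×D matrix with ‖E‖_op ≤ ε for some ε ≤ 1/4, and let T = ψψᵀ + E. Suppose v is a real unit vector and λ a real number with T v = λ v and λ ≥ 1 − ε. Then the inner product satisfies ⟨ψ, v⟩² ≥ 1 − 2ε; equivalently, writing ψ = ⟨ψ,v⟩ v + w with w orthogonal to v, the orthogonal component satisfies ‖w‖ ≤ √2 · ε. -/

import Mathlib

open scoped BigOperators

set_option maxHeartbeats 1000000

/-- The Euclidean (ℓ²) operator norm of a real `D × D` matrix. -/
noncomputable def matOpNorm {D : ℕ} (A : Matrix (Fin D) (Fin D) ℝ) : ℝ :=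
  ‖(Matrix.toEuclideanCLM (𝕜 := ℝ) A :
      EuclideanSpace ℝ (Fin D) →L[ℝ] EuclideanSpace ℝ (Fin D))‖

theorem stmt6 {D : ℕ} (ψ : Fin D → ℝ) (hψ : ∑ i, ψ i ^ 2 = 1)
    (E : Matrix (Fin D) (Fin D) ℝ) (ε : ℝ) (hεq : ε ≤ 1 / 4)
    (hE : matOpNorm E ≤ ε)
    (v : Fin D → ℝ) (hv : ∑ i, v i ^ 2 = 1)
    (lam : ℝ) (hTv : (Matrix.vecMulVec ψ ψ + E).mulVec v = lam • v)
    (hlam : 1 - ε ≤ lam) :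
    1 - 2 * ε ≤ (∑ i, ψ i * v i) ^ 2 ∧
    Real.sqrt (∑ i, (ψ i - (∑ j, ψ j * v j) * v i) ^ 2) ≤ Real.sqrt 2 * ε := by
  have hε0 : 0 ≤ ε := le_trans (norm_nonneg _) hE
  set u : Fin D → ℝ := E.mulVec v with hu
  set c : ℝ := ∑ i, ψ i * v i with hc
  set s : ℝ := ∑ i, v i * u i with hsdef
  set q : ℝ := ∑ i, u i ^ 2 with hqdef
  -- key pointwise identity
  have hkey : ∀ i, c * ψ i + u i = lam * v i := by
    intro i
    have h := congrFun hTv i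
    simp only [Matrix.add_mulVec, Pi.add_apply, Pi.smul_apply, smul_eq_mul] at h
    have hvm : (Matrix.vecMulVec ψ ψ).mulVec v i = ψ i * c := by
      simp only [Matrix.mulVec, Matrix.vecMulVec_apply, dotProduct, mul_assoc]
      rw [← Finset.mul_sum, ← hc]
    rw [hvm] at h
    rw [mul_comm c (ψ i)]
    exact h
  -- q ≤ ε^2
  have hq0 : 0 ≤ q := Finset.sum_nonneg fun i _ => sq_nonneg _
  have hq : q ≤ ε ^ 2 := by
    set V : EuclideanSpace ℝ (Fin D) := (WithLp.equiv 2 _).symm v with hV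
    have hVn : ‖V‖ = 1 := by
      rw [EuclideanSpace.norm_eq]
      have : ∀ i, ‖V i‖ ^ 2 = v i ^ 2 := fun i => by
        simp [hV, Real.norm_eq_abs, sq_abs]
      simp_rw [this, hv, Real.sqrt_one]
    have hle : ‖Matrix.toEuclideanCLM (𝕜 := ℝ) E V‖ ≤ ε := by
      calc ‖Matrix.toEuclideanCLM (𝕜 := ℝ) E V‖
          ≤ matOpNorm E * ‖V‖ := (Matrix.toEuclideanCLM (𝕜 := ℝ) E).le_opNorm V
        _ ≤ ε := by rw [hVn, mul_one]; exact hE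
    have happ : Matrix.toEuclideanCLM (𝕜 := ℝ) E V = (WithLp.equiv 2 _).symm u := by
      rw [hV, hu]
      exact Matrix.toEuclideanCLM_toLp E v
    rw [happ] at hle
    have hnormu : ‖(WithLp.equiv 2 (Fin D → ℝ)).symm u‖ = Real.sqrt q := by
      rw [EuclideanSpace.norm_eq]
      congr 1
      refine Finset.sum_congr rfl fun i _ => ?_
      simp [Real.norm_eq_abs, sq_abs]
    rw [hnormu] at hle
    have := Real.sq_sqrt hq0
    nlinarith [Real.sqrt_nonneg q]
  -- inner products
  have hs : c * c + s = lam := by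
    have h1 : ∑ i, v i * (c * ψ i + u i) = ∑ i, v i * (lam * v i) := by
      refine Finset.sum_congr rfl fun i _ => ?_
      rw [hkey i]
    have h2 : ∑ i, v i * (c * ψ i + u i) = c * c + s := by
      have e1 : ∀ i, v i * (c * ψ i + u i) = c * (ψ i * v i) + v i * u i := fun i => by ring
      simp_rw [e1, Finset.sum_add_distrib, ← Finset.mul_sum]
      rw [← hc, ← hsdef]
    have h3 : ∑ i, v i * (lam * v i) = lam := by
      have : ∀ i, v i * (lam * v i) = lam * v i ^ 2 := fun i => by ring
      simp_rw [this, ← Finset.mul_sum, hv, mul_one]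
    rw [← h2, h1]
    exact h3
  -- Cauchy-Schwarz: s^2 ≤ q
  have hcs : s ^ 2 ≤ q := by
    have h := Finset.sum_mul_sq_le_sq_mul_sq Finset.univ v u
    calc s ^ 2 ≤ (∑ i, v i ^ 2) * ∑ i, u i ^ 2 := h
      _ = q := by rw [hv, one_mul]
  have hsabs : s ≤ ε := by nlinarith
  -- part 1
  have part1 : 1 - 2 * ε ≤ c ^ 2 := by nlinarith
  -- part 2
  have hS : ∑ i, (ψ i - c * v i) ^ 2 = 1 - c ^ 2 := by
    have : ∀ i, (ψ i - c * v i) ^ 2 =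
        ψ i ^ 2 - 2 * c * (ψ i * v i) + c ^ 2 * v i ^ 2 := fun i => by ring
    simp_rw [this, Finset.sum_add_distrib, Finset.sum_sub_distrib, ← Finset.mul_sum, hψ, hv,
      ← hc]
    ring
  have hCW : ∑ i, (s * v i - u i) ^ 2 = q - s ^ 2 := by
    have : ∀ i, (s * v i - u i) ^ 2 =
        s ^ 2 * v i ^ 2 - 2 * s * (v i * u i) + u i ^ 2 := fun i => by ring
    simp_rw [this, Finset.sum_add_distrib, Finset.sum_sub_distrib, ← Finset.mul_sum, hv, hsdef.symm]
    rw [← hqdef]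
    ring
  have hptw : ∀ i, c * ψ i - c ^ 2 * v i = s * v i - u i := by
    intro i
    have h1 := hkey i
    have h2 : c ^ 2 = lam - s := by nlinarith [hs]
    linear_combination h1 - v i * h2
  have hcsum : c ^ 2 * (1 - c ^ 2) = q - s ^ 2 := by
    have h1 : ∑ i, (c * ψ i - c ^ 2 * v i) ^ 2 = c ^ 2 * ∑ i, (ψ i - c * v i) ^ 2 := by
      rw [Finset.mul_sum]
      refine Finset.sum_congr rfl fun i _ => ?_
      ring
    have h2 : ∑ i, (c * ψ i - c ^ 2 * v i) ^ 2 = ∑ i, (s * v i - u i) ^ 2 := by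
      refine Finset.sum_congr rfl fun i _ => ?_
      rw [hptw i]
    rw [← hCW, ← h2, h1, hS]
  have hSnn : 0 ≤ 1 - c ^ 2 := by rw [← hS]; exact Finset.sum_nonneg fun i _ => sq_nonneg _
  have hc2half : 1 / 2 ≤ c ^ 2 := by nlinarith
  have hS2 : 1 - c ^ 2 ≤ 2 * ε ^ 2 := by nlinarith
  constructor
  · exact part1
  · have hgoal : ∑ i, (ψ i - c * v i) ^ 2 ≤ 2 * ε ^ 2 := by rw [hS]; exact hS2
    calc Real.sqrt (∑ i, (ψ i - c * v i) ^ 2) ≤ Real.sqrt (2 * ε ^ 2) :=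
          Real.sqrt_le_sqrt hgoal
      _ = Real.sqrt 2 * ε := by
          rw [Real.sqrt_mul (by norm_num : (0:ℝ) ≤ 2), Real.sqrt_sq hε0]
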